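/- arXiv:2310.09184 — 3 statements merged into one kernel-verified Lean document; each statement's English description precedes it below -/
import Mathlib

section
/- Let T be a binary tree with leaves 1,...,n in left-to-right order. For every i with 1 ≤ i ≤ n, the sequence of left depths ld_T(1),...,ld_T(i) uniquely determines the addresses addr_T(1),...,addr_T(i). In particular, a binary tree is uniquely determined by its left depth sequence. -/
/-- Binary trees: every internal vertex has exactly a left and a right child. -/
inductive BTree : Type where
  | leaf : BTree
  | node : BTree → BTree → BTree

namespace BTree

/-- Number of leaves. -/
def numLeaves : BTree → ℕ
  | leaf => 1
  | node l r => l.numLeaves + r.numLeaves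

/-- Addresses of the leaves in left-to-right order, as words over `{0,1}`;
`false` records a left step (0) and `true` a right step (1). -/
def addrs : BTree → List (List Bool)
  | leaf => [[]]
  | node l r => (l.addrs.map (fun w => false :: w)) ++ (r.addrs.map (fun w => true :: w))

/-- Address of the `i`-th leaf (0-indexed, left to right). -/
def addr (T : BTree) (i : ℕ) : List Bool := T.addrs.getD i []

/-- Left depth of the `i`-th leaf: number of left steps (0's) in its address. -/
def ld (T : BTree) (i : ℕ) : ℕ := (T.addr i).count false

/-- Right depth of the `i`-th leaf: number of right steps (1's) in its address. -/
def rd (T : BTree) (i : ℕ) : ℕ := (T.addr i).count true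

/-- Total depth of the `i`-th leaf. -/
def depth (T : BTree) (i : ℕ) : ℕ := (T.addr i).length

end BTree

namespace BTreeAux
open BTree

/-- remove trailing `true`s -/
def rtt (a : List Bool) : List Bool := (a.reverse.dropWhile (· == true)).reverse

/-- the next address after an address with given left depth of the next leaf -/
def nxt (a : List Bool) (d : ℕ) : List Bool :=
  (rtt a).dropLast ++ true :: List.replicate (d + 1 - a.count false) false

lemma rtt_false (a : List Bool) : rtt (false :: a) = false :: rtt a := by
  unfold rtt
  rw [List.reverse_cons, List.dropWhile_append]
  split
  · next h =>
    simp only [List.isEmpty_iff] at h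
    simp only [h]
    rfl
  · simp

lemma rtt_true (a : List Bool) (h : rtt a ≠ []) : rtt (true :: a) = true :: rtt a := by
  unfold rtt at *
  rw [List.reverse_cons, List.dropWhile_append]
  split
  · next h' =>
    simp only [List.isEmpty_iff] at h'
    rw [h'] at h
    simp at h
  · simp

lemma rtt_ne_of_count {a : List Bool} (h : 0 < a.count false) : rtt a ≠ [] := by
  intro hc
  unfold rtt at hc
  rw [List.reverse_eq_nil_iff] at hc
  have := List.takeWhile_append_dropWhile (p := (· == true)) (l := a.reverse)
  rw [hc, List.append_nil] at this
  have h2 : a.reverse.count false = 0 := by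
    rw [← this]
    rw [List.count_eq_zero]
    intro hb
    have := List.mem_takeWhile_imp hb
    simp at this
  rw [List.count_reverse] at h2
  omega

lemma rtt_replicate_true (m : ℕ) : rtt (List.replicate m true) = [] := by
  unfold rtt
  rw [List.reverse_replicate, List.dropWhile_eq_nil_iff.2, List.reverse_nil]
  intro x hx
  simp [List.eq_of_mem_replicate hx]

lemma nxt_false (a : List Bool) (c : ℕ) (h : 0 < a.count false) :
    nxt (false :: a) (c + 1) = false :: nxt a c := by
  unfold nxt
  rw [rtt_false, List.dropLast_cons_of_ne_nil (rtt_ne_of_count h)]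
  simp [List.count_cons]

lemma nxt_true (a : List Bool) (c : ℕ) (h : 0 < a.count false) :
    nxt (true :: a) c = true :: nxt a c := by
  unfold nxt
  rw [rtt_true a (rtt_ne_of_count h), List.dropLast_cons_of_ne_nil (rtt_ne_of_count h)]
  simp [List.count_cons]

lemma nxt_cross (m k : ℕ) :
    nxt (false :: List.replicate m true) k = true :: List.replicate k false := by
  unfold nxt
  rw [rtt_false, rtt_replicate_true]
  simp [List.count_cons, List.count_replicate]

/-- left spine length -/
def lsp : BTree → ℕ
  | .leaf => 0
  | .node l _ => lsp l + 1

/-- right spine length -/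
def rsp : BTree → ℕ
  | .leaf => 0
  | .node _ r => rsp r + 1

lemma length_addrs (T : BTree) : T.addrs.length = T.numLeaves := by
  induction T with
  | leaf => simp [addrs, numLeaves]
  | node l r ihl ihr => simp [addrs, numLeaves, ihl, ihr]

lemma numLeaves_pos (T : BTree) : 0 < T.numLeaves := by
  induction T with
  | leaf => simp [numLeaves]
  | node l r ihl ihr => simp [numLeaves]; omega

lemma addrs_ne (T : BTree) : T.addrs ≠ [] := by
  have h := length_addrs T
  have := numLeaves_pos T
  intro hc
  rw [hc] at h
  simp at h
  omega

lemma head_addrs (T : BTree) : ∃ rest, T.addrs = List.replicate (lsp T) false :: rest := by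
  induction T with
  | leaf => exact ⟨[], rfl⟩
  | node l r ihl ihr =>
    obtain ⟨rest, hrest⟩ := ihl
    refine ⟨rest.map (fun w => false :: w) ++ r.addrs.map (fun w => true :: w), ?_⟩
    simp [addrs, hrest, lsp, List.replicate_succ]

lemma getLast_addrs (T : BTree) : T.addrs.getLast (addrs_ne T) = List.replicate (rsp T) true := by
  induction T with
  | leaf => rfl
  | node l r ihl ihr =>
    show (l.addrs.map (fun w => false :: w) ++ r.addrs.map (fun w => true :: w)).getLast _ = _
    rw [List.getLast_append_of_ne_nil (by simp [addrs_ne r])]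
    rw [List.getLast_map]
    · rw [ihr]; simp [rsp, List.replicate_succ]
    · simp [addrs_ne r]

lemma count_pos (T : BTree) (j : ℕ) (hj : j + 1 < T.addrs.length) :
    0 < (T.addrs[j]'(by omega)).count false := by
  induction T generalizing j with
  | leaf => simp [addrs] at hj
  | node l r ihl ihr =>
    have hj' : j + 1 < (l.addrs.map (fun w => false :: w)).length +
        (r.addrs.map (fun w => true :: w)).length := by
      simpa [addrs] using hj
    by_cases h : j < (l.addrs.map (fun w => false :: w)).length
    · show 0 < ((l.addrs.map (fun w => false :: w) ++ r.addrs.map (fun w => true :: w))[j]'(by rw [List.length_append]; omega)).count false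
      rw [List.getElem_append_left h]
      simp [List.count_cons]
    · push_neg at h
      show 0 < ((l.addrs.map (fun w => false :: w) ++ r.addrs.map (fun w => true :: w))[j]'(by rw [List.length_append]; omega)).count false
      rw [List.getElem_append_right h]
      have hlen : (l.addrs.map (fun w => false :: w)).length = l.addrs.length := by simp
      have h2 : (j - l.addrs.length) + 1 < r.addrs.length := by
        simp at h hj'
        omega
      have key := ihr (j - (l.addrs.map (fun w => false :: w)).length) (by simpa using h2)
      simpa [List.count_cons] using key


lemma step (T : BTree) (j : ℕ) (h : j + 1 < T.addrs.length) :
    T.addrs[j+1] = nxt (T.addrs[j]'(by omega)) ((T.addrs[j+1]).count false) := by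
  induction T generalizing j with
  | leaf => simp [addrs] at h
  | node l r ihl ihr =>
    set L := l.addrs.map (fun w => false :: w) with hL
    set R := r.addrs.map (fun w => true :: w) with hR
    have hTa : (l.node r).addrs = L ++ R := rfl
    have hLlen : L.length = l.addrs.length := by simp [hL]
    have hRlen : R.length = r.addrs.length := by simp [hR]
    have hlen : (l.node r).addrs.length = L.length + R.length := by simp [hTa]
    rcases lt_trichotomy (j+1) L.length with hc | hc | hc
    · -- both in left part
      have hjL : j < L.length := by omega
      simp only [hTa]
      rw [List.getElem_append_left hc, List.getElem_append_left hjL]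
      simp only [hL, List.getElem_map]
      have hcnt : 0 < (l.addrs[j]'(by omega)).count false :=
        count_pos l j (by omega)
      rw [List.count_cons_self, nxt_false _ _ hcnt]
      exact congrArg (List.cons false) (ihl j (by omega))
    · -- cross the boundary
      have hjL : j < L.length := by omega
      have hlne : l.addrs ≠ [] := addrs_ne l
      simp only [hTa]
      rw [List.getElem_append_right (by omega), List.getElem_append_left hjL]
      have hj : j = l.addrs.length - 1 := by omega
      have hlast : L[j]'hjL = false :: List.replicate (rsp l) true := by
        simp only [hL, List.getElem_map, hj]
        rw [← List.getLast_eq_getElem hlne, getLast_addrs]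
      have h0 : j + 1 - L.length = 0 := by omega
      have hfirst : R[j + 1 - L.length]'(by omega) = true :: List.replicate (lsp r) false := by
        simp only [h0]
        obtain ⟨rest, hrest⟩ := head_addrs r
        simp only [hR, hrest]
        simp
      rw [hlast, hfirst, List.count_cons_of_ne (by simp), List.count_replicate]
      simp [nxt_cross]
    · -- both in right part
      simp only [hTa]
      rw [List.getElem_append_right (show L.length ≤ j + 1 by omega),
        List.getElem_append_right (show L.length ≤ j by omega)]
      have he : j + 1 - L.length = (j - L.length) + 1 := by omega
      have h2 : (j - L.length) + 1 < r.addrs.length := by omega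
      simp only [hR, List.getElem_map]
      have hcnt : 0 < (r.addrs[j - L.length]'(by omega)).count false :=
        count_pos r (j - L.length) h2
      rw [List.count_cons_of_ne (by simp), nxt_true _ _ hcnt]
      simp only [he]
      congr 1
      exact ihr (j - L.length) h2

lemma takeWhile_append_all {α : Type*} (p : α → Bool) (l m : List α)
    (hl : ∀ x ∈ l, p x = true) :
    List.takeWhile p (l ++ m) = l ++ List.takeWhile p m := by
  induction l with
  | nil => simp
  | cons a as ih =>
    simp only [List.cons_append, List.takeWhile_cons, hl a (by simp)]
    rw [ih (fun x hx => hl x (by simp [hx]))]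
    simp

lemma addrs_inj (T T' : BTree) (h : T.addrs = T'.addrs) : T = T' := by
  induction T generalizing T' with
  | leaf =>
    cases T' with
    | leaf => rfl
    | node l' r' =>
      obtain ⟨rest, hrest⟩ := head_addrs (l'.node r')
      rw [hrest] at h
      simp [addrs, lsp, List.replicate_succ] at h
  | node l r ihl ihr =>
    cases T' with
    | leaf =>
      obtain ⟨rest, hrest⟩ := head_addrs (l.node r)
      rw [hrest] at h
      simp [addrs, lsp, List.replicate_succ] at h
    | node l' r' =>
      have h' : l.addrs.map (fun w => false :: w) ++ r.addrs.map (fun w => true :: w)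
          = l'.addrs.map (fun w => false :: w) ++ r'.addrs.map (fun w => true :: w) := h
      set p : List Bool → Bool := fun w => w.head? == some false with hp
      have key : ∀ (a b : BTree), List.takeWhile p
          (a.addrs.map (fun w => false :: w) ++ b.addrs.map (fun w => true :: w))
          = a.addrs.map (fun w => false :: w) := by
        intro a b
        rw [takeWhile_append_all p _ _ (by
          intro x hx
          simp only [List.mem_map] at hx
          obtain ⟨w, _, rfl⟩ := hx
          simp [hp])]
        have : List.takeWhile p (b.addrs.map (fun w => true :: w)) = [] := by
          obtain ⟨rest, hrest⟩ := head_addrs b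
          rw [hrest]
          simp [hp]
        simp [this]
      have hA : l.addrs.map (fun w => false :: w) = l'.addrs.map (fun w => false :: w) := by
        rw [← key l r, ← key l' r', h']
      have hAeq : l.addrs = l'.addrs :=
        List.map_injective_iff.2 (fun a b hab => by simpa using hab) hA
      have hBeq : r.addrs = r'.addrs := by
        rw [hA] at h'
        have := List.append_cancel_left h'
        exact List.map_injective_iff.2 (fun a b hab => by simpa using hab) this
      rw [ihl l' hAeq, ihr r' hBeq]

end BTreeAux

/-- The left depths of the first `i+1` leaves determine their addresses; in
particular, a binary tree is uniquely determined by its left depth sequence. -/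
theorem stmt1 (n : ℕ) :
    (∀ T T' : BTree, T.numLeaves = n → T'.numLeaves = n → ∀ i < n,
      (∀ j ≤ i, T.ld j = T'.ld j) → ∀ j ≤ i, T.addr j = T'.addr j) ∧
    (∀ T T' : BTree, T.numLeaves = n → T'.numLeaves = n →
      (∀ j < n, T.ld j = T'.ld j) → T = T') := by
  open BTreeAux in
  have estep : ∀ (T : BTree), T.numLeaves = n → ∀ j, j + 1 < n →
      T.addr (j+1) = nxt (T.addr j) (T.ld (j+1)) := by
    intro T hT j hj
    have hlen : T.addrs.length = n := by rw [length_addrs, hT]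
    simp only [BTree.ld, BTree.addr]
    rw [List.getD_eq_getElem T.addrs [] (show j + 1 < T.addrs.length by omega),
      List.getD_eq_getElem T.addrs [] (show j < T.addrs.length by omega)]
    exact step T j (by omega)
  have ebase : ∀ (T : BTree), 0 < T.numLeaves → T.addr 0 = List.replicate (T.ld 0) false := by
    intro T _
    obtain ⟨rest, hrest⟩ := head_addrs T
    have h0 : T.addr 0 = List.replicate (lsp T) false := by
      simp [BTree.addr, hrest]
    rw [h0]
    simp [BTree.ld, h0, List.count_replicate]
  have part1 : ∀ T T' : BTree, T.numLeaves = n → T'.numLeaves = n → ∀ i < n,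
      (∀ j ≤ i, T.ld j = T'.ld j) → ∀ j ≤ i, T.addr j = T'.addr j := by
    intro T T' hT hT' i hi hld j
    induction j with
    | zero =>
      intro _
      rw [ebase T (by omega), ebase T' (by omega), hld 0 (by omega)]
    | succ j ih =>
      intro hj
      have h1 : T.addr j = T'.addr j := ih (by omega)
      rw [estep T hT j (by omega), estep T' hT' j (by omega), h1, hld (j+1) hj]
  refine ⟨part1, ?_⟩
  intro T T' hT hT' hld
  have hn : 0 < n := hT ▸ numLeaves_pos T
  have haddr : ∀ j < n, T.addr j = T'.addr j := by
    intro j hj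
    exact part1 T T' hT hT' (n-1) (by omega) (fun k hk => hld k (by omega)) j (by omega)
  apply addrs_inj
  have hlen : T.addrs.length = n := by rw [length_addrs, hT]
  have hlen' : T'.addrs.length = n := by rw [length_addrs, hT']
  apply List.ext_getElem (by omega)
  intro i h1 h2
  have := haddr i (by omega)
  simp only [BTree.addr] at this
  rwa [List.getD_eq_getElem T.addrs [] h1, List.getD_eq_getElem T'.addrs [] h2] at this
end

section
/- Let T and T' be distinct binary trees with n leaves each (leaves numbered left to right). Let i be the least index such that ld_T(i) ≠ ld_{T'}(i). Then rd_T(i) = rd_{T'}(i). -/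
namespace BTree

lemma addrs_length (T : BTree) : T.addrs.length = T.numLeaves := by
  induction T with
  | leaf => simp [addrs, numLeaves]
  | node l r ihl ihr => simp [addrs, numLeaves, ihl, ihr]

lemma numLeaves_pos (T : BTree) : 0 < T.numLeaves := by
  induction T with
  | leaf => simp [numLeaves]
  | node l r ihl ihr => simp [numLeaves]; omega

lemma addrs_node (l r : BTree) :
    (node l r).addrs = (l.addrs.map (fun w => false :: w)) ++ (r.addrs.map (fun w => true :: w)) :=
  rfl

lemma addr_node_left (l r : BTree) (i : ℕ) (h : i < l.numLeaves) :
    (node l r).addr i = false :: l.addr i := by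
  have hl : i < l.addrs.length := by rw [addrs_length]; exact h
  rw [addr, addr, addrs_node]
  rw [List.getD_append _ _ _ _ (by simpa using hl)]
  rw [List.getD_eq_getElem _ _ (by simpa using hl), List.getD_eq_getElem _ _ hl]
  simp

lemma addr_node_right (l r : BTree) (i : ℕ) (h1 : l.numLeaves ≤ i)
    (h2 : i < (node l r).numLeaves) :
    (node l r).addr i = true :: r.addr (i - l.numLeaves) := by
  have hl : l.addrs.length ≤ i := by rw [addrs_length]; exact h1
  have hr : i - l.numLeaves < r.addrs.length := by
    rw [addrs_length]; simp [numLeaves] at h2; omega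
  rw [addr, addr, addrs_node]
  rw [List.getD_append_right _ _ _ _ (by simpa using hl)]
  rw [List.getD_eq_getElem _ _ (by simpa [addrs_length] using hr),
      List.getD_eq_getElem _ _ (by simpa [addrs_length] using hr)]
  simp [addrs_length]

lemma addr_zero (T : BTree) : T.addr 0 = List.replicate (T.ld 0) false := by
  suffices h : ∃ k, T.addr 0 = List.replicate k false by
    obtain ⟨k, hk⟩ := h
    rw [ld, hk, List.count_replicate]
    simp [hk]
  induction T with
  | leaf => exact ⟨0, rfl⟩
  | node l r ihl ihr =>
    obtain ⟨k, hk⟩ := ihl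
    exact ⟨k + 1, by rw [addr_node_left l r 0 l.numLeaves_pos, hk]; rfl⟩

lemma addr_last (T : BTree) : ∃ k, T.addr (T.numLeaves - 1) = List.replicate k true := by
  induction T with
  | leaf => exact ⟨0, rfl⟩
  | node l r ihl ihr =>
    obtain ⟨k, hk⟩ := ihr
    refine ⟨k + 1, ?_⟩
    have h1 : l.numLeaves ≤ (node l r).numLeaves - 1 := by
      have := r.numLeaves_pos; simp [numLeaves]; omega
    have h2 : (node l r).numLeaves - 1 < (node l r).numLeaves := by
      have := (node l r).numLeaves_pos; omega
    rw [addr_node_right l r _ h1 h2]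
    have : (node l r).numLeaves - 1 - l.numLeaves = r.numLeaves - 1 := by
      have := r.numLeaves_pos; simp [numLeaves]; omega
    rw [this, hk]; rfl

/-- consecutive leaves: common prefix, then `false :: trues` vs `true :: falses`. -/
lemma consec (T : BTree) (i : ℕ) (h : i + 1 < T.numLeaves) :
    ∃ w t f, T.addr i = w ++ false :: List.replicate t true ∧
      T.addr (i + 1) = w ++ true :: List.replicate f false := by
  induction T generalizing i with
  | leaf => simp [numLeaves] at h
  | node l r ihl ihr =>
    rcases lt_trichotomy (i + 1) l.numLeaves with hc | hc | hc
    · obtain ⟨w, t, f, h1, h2⟩ := ihl i hc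
      refine ⟨false :: w, t, f, ?_, ?_⟩
      · rw [addr_node_left l r i (by omega), h1]; rfl
      · rw [addr_node_left l r (i+1) hc, h2]; rfl
    · obtain ⟨k, hk⟩ := l.addr_last
      refine ⟨[], k, r.ld 0, ?_, ?_⟩
      · rw [addr_node_left l r i (by omega), show i = l.numLeaves - 1 by omega, hk]; rfl
      · rw [addr_node_right l r (i+1) (by omega) h, show i + 1 - l.numLeaves = 0 by omega,
          r.addr_zero]; rfl
    · obtain ⟨w, t, f, h1, h2⟩ := ihr (i - l.numLeaves) (by simp [numLeaves] at h; omega)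
      refine ⟨true :: w, t, f, ?_, ?_⟩
      · rw [addr_node_right l r i (by omega) (by omega), h1]; rfl
      · rw [addr_node_right l r (i+1) (by omega) h,
          show i + 1 - l.numLeaves = i - l.numLeaves + 1 by omega, h2]; rfl

lemma strip_aux (w : List Bool) (t : ℕ) :
    ((w ++ false :: List.replicate t true).reverse.dropWhile (· == true)).reverse = w ++ [false] := by
  rw [List.reverse_append, List.reverse_cons, List.reverse_replicate]
  rw [List.append_assoc, List.dropWhile_append]
  simp [List.dropWhile_replicate]

lemma key (w w' : List Bool) (t t' : ℕ)
    (h : w ++ false :: List.replicate t true = w' ++ false :: List.replicate t' true) :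
    w = w' := by
  have h2 := congrArg (fun l => ((List.reverse l).dropWhile (· == true)).reverse) h
  simp only [strip_aux] at h2
  have := congrArg List.dropLast h2
  simpa using this

/-- the address of leaf `i` is determined by `ld 0, …, ld i`. -/
lemma addr_determined (T T' : BTree) (i : ℕ) (hn : i < T.numLeaves) (hn' : i < T'.numLeaves)
    (hld : ∀ j ≤ i, T.ld j = T'.ld j) : T.addr i = T'.addr i := by
  induction i with
  | zero => rw [addr_zero, addr_zero, hld 0 le_rfl]
  | succ i ih =>
    have hprev : T.addr i = T'.addr i := ih (by omega) (by omega) (fun j hj => hld j (by omega))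
    obtain ⟨w, t, f, h1, h2⟩ := consec T i hn
    obtain ⟨w', t', f', h1', h2'⟩ := consec T' i hn'
    have hw : w = w' := key w w' t t' (by rw [← h1, ← h1', hprev])
    have hf : f = f' := by
      have e1 : T.ld (i+1) = w.count false + f := by
        rw [ld, h2]; simp [List.count_append, List.count_replicate]
      have e2 : T'.ld (i+1) = w'.count false + f' := by
        rw [ld, h2']; simp [List.count_append, List.count_replicate]
      have := hld (i+1) le_rfl
      rw [e1, e2, hw] at this
      omega
    rw [h2, h2', hw, hf]

end BTree

/-- For distinct binary trees with `n` leaves, at the least index where the left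
depths differ, the right depths coincide. -/
theorem stmt2 (T T' : BTree) (n i : ℕ)
    (hT : T.numLeaves = n) (hT' : T'.numLeaves = n) (hne : T ≠ T')
    (hi : i < n) (hdiff : T.ld i ≠ T'.ld i)
    (hleast : ∀ j < i, T.ld j = T'.ld j) :
    T.rd i = T'.rd i := by
  subst hT
  cases i with
  | zero =>
    rw [BTree.rd, BTree.rd, BTree.addr_zero, BTree.addr_zero]
    simp [List.count_replicate]
  | succ j =>
    have hprev : T.addr j = T'.addr j :=
      BTree.addr_determined T T' j (by omega) (by omega)
        (fun k hk => hleast k (by omega))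
    obtain ⟨w, t, f, h1, h2⟩ := BTree.consec T j hi
    obtain ⟨w', t', f', h1', h2'⟩ := BTree.consec T' j (by omega)
    have hw : w = w' := BTree.key w w' t t' (by rw [← h1, ← h1', hprev])
    rw [BTree.rd, BTree.rd, h2, h2', hw]
    simp [List.count_append, List.count_replicate]
end

section
/- Let A = (A, ∘) with x ∘ y = φ₀(x) + φ₁(y), where φ₀, φ₁ are automorphisms of a group (A, +). Then A satisfies the bracketing identity t ≈ t' (for bracketings t, t' of size n with trees T, T') if and only if φ_{addr_T(i)} = φ_{addr_{T'}(i)} for all i = 1,...,n. -/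
/-- Evaluation of the bracketing corresponding to a binary tree, with the
variables `f k, f (k+1), ...` plugged in at the leaves, left to right. -/
def BTree.evalAux {A : Type*} (op : A → A → A) (f : ℕ → A) : BTree → ℕ → A
  | .leaf, k => f k
  | .node l r, k => op (l.evalAux op f k) (r.evalAux op f (k + l.numLeaves))

/-- Term operation induced on `A` by the bracketing corresponding to `T`. -/
def BTree.eval {A : Type*} (op : A → A → A) (T : BTree) (f : ℕ → A) : A :=
  T.evalAux op f 0

/-- `φ_w` for a word `w` over `{0,1}`: `φ_ε = id`, `φ_{0w} = φ₀ ∘ φ_w`, `φ_{1w} = φ₁ ∘ φ_w`. -/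
def phiWord {A : Type*} (φ₀ φ₁ : A → A) : List Bool → A → A
  | [] => id
  | c :: w => (if c then φ₁ else φ₀) ∘ phiWord φ₀ φ₁ w

-- auxiliary
lemma BTree.addrs_length_s10 (T : BTree) : T.addrs.length = T.numLeaves := by
  induction T with
  | leaf => rfl
  | node l r ihl ihr => simp [addrs, numLeaves, ihl, ihr]

lemma BTree.addr_node_left_s10 (l r : BTree) (i : ℕ) (h : i < l.numLeaves) :
    (BTree.node l r).addr i = false :: l.addr i := by
  have hl : i < l.addrs.length := by rwa [addrs_length_s10]
  have h1 : i < (l.addrs.map (fun w => false :: w)).length := by simpa using hl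
  have htot : i < ((l.addrs.map (fun w => false :: w)) ++ (r.addrs.map (fun w => true :: w))).length := by
    simp; omega
  rw [BTree.addr, BTree.addrs, List.getD_eq_getElem _ _ htot, List.getElem_append_left h1,
    List.getElem_map, BTree.addr, List.getD_eq_getElem _ _ hl]

lemma BTree.addr_node_right_s10 (l r : BTree) (j : ℕ) (h : j < r.numLeaves) :
    (BTree.node l r).addr (l.numLeaves + j) = true :: r.addr j := by
  have hr : j < r.addrs.length := by rwa [addrs_length_s10]
  have hlen : (l.addrs.map (fun w => false :: w)).length = l.numLeaves := by
    simp [addrs_length_s10]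
  have htot : l.numLeaves + j < ((l.addrs.map (fun w => false :: w)) ++ (r.addrs.map (fun w => true :: w))).length := by
    simp [addrs_length_s10]; omega
  have hge : (l.addrs.map (fun w => false :: w)).length ≤ l.numLeaves + j := by omega
  simp only [addr, addrs, List.getD_eq_getElem _ _ htot, List.getElem_append_right hge,
    List.getD_eq_getElem _ _ hr]
  simp [hlen]

lemma phiWord_zero {A : Type*} [AddGroup A] (φ₀ φ₁ : AddAut A) (w : List Bool) :
    phiWord (⇑φ₀) (⇑φ₁) w 0 = 0 := by
  induction w with
  | nil => rfl
  | cons c w ih => cases c <;> simp [phiWord, ih]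

lemma evalAux_eq {A : Type*} [AddGroup A] (φ₀ φ₁ : AddAut A) (T : BTree) (f : ℕ → A) :
    ∀ k, T.evalAux (fun x y => φ₀ x + φ₁ y) f k
      = ((List.range T.numLeaves).map
          (fun i => phiWord (⇑φ₀) (⇑φ₁) (T.addr i) (f (k + i)))).sum := by
  induction T with
  | leaf =>
    intro k
    simp [BTree.evalAux, BTree.numLeaves, BTree.addr, BTree.addrs, phiWord, List.range_succ]
  | node l r ihl ihr =>
    intro k
    have : (List.range (l.numLeaves + r.numLeaves))
        = List.range l.numLeaves ++ (List.range r.numLeaves).map (l.numLeaves + ·) :=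
      List.range_add
    rw [BTree.evalAux, ihl, ihr]
    simp only [BTree.numLeaves, this, List.map_append, List.map_map, List.sum_append]
    congr 1
    · rw [show (⇑φ₀ : A → A) = ((φ₀ : A →+ A) : A → A) from rfl, map_list_sum (φ₀ : A →+ A), List.map_map]
      congr 1
      refine List.map_congr_left ?_
      intro i hi
      rw [List.mem_range] at hi
      simp [Function.comp, BTree.addr_node_left_s10 l r i hi, phiWord]
    · rw [show (⇑φ₁ : A → A) = ((φ₁ : A →+ A) : A → A) from rfl, map_list_sum (φ₁ : A →+ A), List.map_map]
      congr 1
      refine List.map_congr_left ?_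
      intro j hj
      rw [List.mem_range] at hj
      simp [Function.comp, BTree.addr_node_right_s10 l r j hj, phiWord, Nat.add_assoc]

lemma sum_delta {A : Type*} [AddGroup A] (g : ℕ → A) (i : ℕ)
    (h0 : ∀ j, j ≠ i → g j = 0) :
    ∀ n, i < n → ((List.range n).map g).sum = g i := by
  intro n
  induction n with
  | zero => omega
  | succ n ih =>
    intro hi
    rw [List.range_succ, List.map_append, List.sum_append]
    rcases Nat.lt_or_ge i n with h | h
    · rw [ih h]
      simp [h0 n (by omega)]
    · have : i = n := by omega
      subst this
      have hz : ((List.range i).map g).sum = 0 := by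
        apply List.sum_eq_zero
        intro x hx
        simp only [List.mem_map, List.mem_range] at hx
        obtain ⟨j, hj, rfl⟩ := hx
        exact h0 j (by omega)
      simp [hz]

/-- A linear quasigroup satisfies the bracketing identity `t ≈ t'` iff
`φ_{addr_T(i)} = φ_{addr_{T'}(i)}` for all leaves `i`. -/
theorem stmt10 (A : Type*) [AddGroup A] (φ₀ φ₁ : AddAut A)
    (T T' : BTree) (n : ℕ) (hT : T.numLeaves = n) (hT' : T'.numLeaves = n) :
    (∀ f : ℕ → A, T.eval (fun x y => φ₀ x + φ₁ y) f
        = T'.eval (fun x y => φ₀ x + φ₁ y) f) ↔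
      ∀ i < n, phiWord (⇑φ₀) (⇑φ₁) (T.addr i) = phiWord (⇑φ₀) (⇑φ₁) (T'.addr i) := by
  constructor
  · intro h i hi
    funext x
    have := h (fun k => if k = i then x else 0)
    rw [BTree.eval, BTree.eval, evalAux_eq, evalAux_eq, hT, hT'] at this
    rw [sum_delta _ i ?_ n hi, sum_delta _ i ?_ n hi] at this
    · simpa using this
    · intro j hj
      simp [Nat.zero_add, hj, phiWord_zero]
    · intro j hj
      simp [Nat.zero_add, hj, phiWord_zero]
  · intro h f
    rw [BTree.eval, BTree.eval, evalAux_eq, evalAux_eq, hT, hT']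
    congr 1
    refine List.map_congr_left ?_
    intro i hi
    rw [List.mem_range] at hi
    rw [h i hi]
end
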